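/- For unit vectors n, r ∈ ℝ³ and ε ∈ [0,1) with 1 + ε² + 2ε(n·r) > 0, the vector r' = ((1-ε²)r + 2ε(1 + ε(n·r))n) / (1 + ε² + 2ε(n·r)) is a unit vector in ℝ³. -/

import Mathlib

open Matrix

noncomputable section

/-- Pauli matrix σ₁. -/
def pauli1 : Matrix (Fin 2) (Fin 2) ℂ := !![0, 1; 1, 0]
/-- Pauli matrix σ₂. -/
def pauli2 : Matrix (Fin 2) (Fin 2) ℂ := !![0, -Complex.I; Complex.I, 0]
/-- Pauli matrix σ₃. -/
def pauli3 : Matrix (Fin 2) (Fin 2) ℂ := !![1, 0; 0, -1]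

/-- σ(v) = v₁σ₁ + v₂σ₂ + v₃σ₃ for v ∈ ℝ³. -/
def pauliVec (v : Fin 3 → ℝ) : Matrix (Fin 2) (Fin 2) ℂ :=
  (v 0 : ℂ) • pauli1 + (v 1 : ℂ) • pauli2 + (v 2 : ℂ) • pauli3

/-- Euclidean dot product on ℝ³. -/
def dot3 (a b : Fin 3 → ℝ) : ℝ := a 0 * b 0 + a 1 * b 1 + a 2 * b 2

/-- v is a unit vector of ℝ³. -/
def IsUnitVec (v : Fin 3 → ℝ) : Prop := dot3 v v = 1

/-- P(n,ε) = (I + ε σ(n))/2. -/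
def Pmat (n : Fin 3 → ℝ) (ε : ℝ) : Matrix (Fin 2) (Fin 2) ℂ :=
  ((1 : ℂ)/2) • (1 + (ε : ℂ) • pauliVec n)

/-- λ(ε,n,r) = (1 + ε² + 2ε(n·r))/4. -/
def lam (ε : ℝ) (n r : Fin 3 → ℝ) : ℝ := (1 + ε^2 + 2*ε*(dot3 n r))/4

/-- The map w(r) = ((1-ε²)r + 2ε(1+ε(n·r))n)/(1+ε²+2ε(n·r)). -/
def wmap (ε : ℝ) (n r : Fin 3 → ℝ) : Fin 3 → ℝ :=
  fun i => ((1 - ε^2) * r i + 2*ε*(1 + ε*(dot3 n r)) * n i) / (1 + ε^2 + 2*ε*(dot3 n r))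

/-- r' = w(r) is a unit vector. -/
theorem stmt3 (n r : Fin 3 → ℝ) (hn : IsUnitVec n) (hr : IsUnitVec r)
    (ε : ℝ) (hε : ε ∈ Set.Ico (0:ℝ) 1) (hpos : 0 < 1 + ε^2 + 2*ε*(dot3 n r)) :
    IsUnitVec (wmap ε n r) := by
  have hD : (1 + ε^2 + 2*ε*(dot3 n r)) ≠ 0 := ne_of_gt hpos
  unfold IsUnitVec at hn hr ⊢
  simp only [wmap, dot3] at hn hr hD ⊢
  field_simp
  rw [div_eq_one_iff_eq (pow_ne_zero _ (by convert hD using 2; ring))]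
  linear_combination ((1-ε^2)^2) * hr +
    (2*ε*(1+ε*(n 0*r 0+n 1*r 1+n 2*r 2)))^2 * hn
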